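/- Dynamical singular regime integration away from the boundary (Lemma 5.8). There exists a constant C > 0 depending only on Ω such that for every 0 < ε < 1, all 0 < t ≤ 1, all x ∈ Ω with d(x,∂Ω) ≥ ε, all v ∈ ℝ³, and all ϖ > 1: ∫₀ᵗ e^{−ϖ⟨v⟩²(t−s)} ln( 1 + 1/d(X(s;t,x,v), ∂Ω) ) ds ≤ (C/(√ϖ · ⟨v⟩)) · ln(1 + 1/ε). -/

import Mathlib

open MeasureTheory Set
open scoped RealInnerProductSpace

noncomputable section

abbrev E3 : Type := EuclideanSpace ℝ (Fin 3)

/-- The exterior domain `Ω = {ξ < 0}`. -/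
def domOmega (ξ : E3 → ℝ) : Set E3 := {x | ξ x < 0}

/-- The boundary `∂Ω = {ξ = 0}`. -/
def bdryOmega (ξ : E3 → ℝ) : Set E3 := {x | ξ x = 0}

/-- The backward ray from `(x,v)` leaves `Ω` in finite time, i.e. `t_b(x,v) < ∞`. -/
def HitsBdry (ξ : E3 → ℝ) (x v : E3) : Prop :=
  ∃ τ > (0 : ℝ), x - τ • v ∉ domOmega ξ

/-- The backward exit time `t_b(x,v)`. -/
def tb (ξ : E3 → ℝ) (x v : E3) : ℝ :=
  sSup {s : ℝ | 0 ≤ s ∧ ∀ τ ∈ Set.Ioo (0 : ℝ) s, x - τ • v ∈ domOmega ξ}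

/-- The backward exit position `x_b(x,v)`. -/
def xbpos (ξ : E3 → ℝ) (x v : E3) : E3 := x - tb ξ x v • v

/-- Outward unit normal `n(y) = ∇ξ(y)/|∇ξ(y)|`. -/
def nvec (ξ : E3 → ℝ) (y : E3) : E3 := ‖gradient ξ y‖⁻¹ • gradient ξ y

/-- Specular reflection `R_y w = w − 2 (n(y)·w) n(y)`. -/
def specR (ξ : E3 → ℝ) (y w : E3) : E3 := w - (2 * ⟪nvec ξ y, w⟫) • nvec ξ y

open Classical in
/-- Billiard trajectory position `X(s;t,x,v)`. -/
def Xtr (ξ : E3 → ℝ) (s t : ℝ) (x v : E3) : E3 :=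
  if HitsBdry ξ x v ∧ s ≤ t - tb ξ x v then
    xbpos ξ x v - (t - tb ξ x v - s) • specR ξ (xbpos ξ x v) v
  else x - (t - s) • v

open Classical in
/-- Billiard trajectory velocity `V(s;t,x,v)`. -/
def Vtr (ξ : E3 → ℝ) (s t : ℝ) (x v : E3) : E3 :=
  if HitsBdry ξ x v ∧ s ≤ t - tb ξ x v then specR ξ (xbpos ξ x v) v else v

/-- Japanese bracket `⟨v⟩ = √(1+|v|²)`. -/
def jap (v : E3) : ℝ := Real.sqrt (1 + ‖v‖ ^ 2)

/-- Hypotheses on the domain: `𝒪 = {ξ > 0}` is bounded, `ξ` is smooth with nonvanishing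
gradient on the boundary, and `𝒪` is uniformly convex. -/
structure DomainHyp (ξ : E3 → ℝ) (θ : ℝ) : Prop where
  pos : 0 < θ
  smooth : ContDiff ℝ (⊤ : ℕ∞) ξ
  bounded : Bornology.IsBounded {x : E3 | 0 < ξ x}
  gradNe : ∀ x : E3, ξ x = 0 → gradient ξ x ≠ 0
  uconvex : ∀ x ζ : E3, θ * ‖ζ‖ ^ 2 ≤ -(iteratedFDeriv ℝ 2 ξ x ![ζ, ζ])

lemma line_hasDerivAt (ξ : E3 → ℝ) (hsm : ContDiff ℝ (⊤ : ℕ∞) ξ) (p w : E3) (τ : ℝ) :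
    HasDerivAt (fun s : ℝ => ξ (p + s • w)) (fderiv ℝ ξ (p + τ • w) w) τ := by
  have hline : HasDerivAt (fun s : ℝ => p + s • w) w τ := by
    simpa using ((hasDerivAt_id τ).smul_const w).const_add p
  have hξ : HasFDerivAt ξ (fderiv ℝ ξ (p + τ • w)) (p + τ • w) :=
    (hsm.differentiable (by simp) (p + τ • w)).hasFDerivAt
  exact hξ.comp_hasDerivAt τ hline

lemma line_hasDerivAt2 (ξ : E3 → ℝ) (hsm : ContDiff ℝ (⊤ : ℕ∞) ξ) (p w : E3) (τ : ℝ) :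
    HasDerivAt (fun s : ℝ => fderiv ℝ ξ (p + s • w) w)
      (fderiv ℝ (fderiv ℝ ξ) (p + τ • w) w w) τ := by
  have hline : HasDerivAt (fun s : ℝ => p + s • w) w τ := by
    simpa using ((hasDerivAt_id τ).smul_const w).const_add p
  have hF : ContDiff ℝ (⊤ : ℕ∞) (fderiv ℝ ξ) := hsm.fderiv_right (mod_cast le_top)
  have hF' : HasFDerivAt (fderiv ℝ ξ) (fderiv ℝ (fderiv ℝ ξ) (p + τ • w)) (p + τ • w) :=
    (hF.differentiable (by simp) (p + τ • w)).hasFDerivAt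
  have hc : HasDerivAt (fun s : ℝ => fderiv ℝ ξ (p + s • w))
      (fderiv ℝ (fderiv ℝ ξ) (p + τ • w) w) τ := hF'.comp_hasDerivAt τ hline
  simpa using hc.clm_apply (hasDerivAt_const τ w)

lemma strongConc (ξ : E3 → ℝ) (θ : ℝ)
    (hsm : ContDiff ℝ (⊤ : ℕ∞) ξ)
    (huc : ∀ x ζ : E3, θ * ‖ζ‖ ^ 2 ≤ -(iteratedFDeriv ℝ 2 ξ x ![ζ, ζ]))
    (p w : E3) (σ s : ℝ) :
    ξ (p + s • w) ≤ ξ (p + σ • w) + fderiv ℝ ξ (p + σ • w) w * (s - σ)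
      - θ * ‖w‖ ^ 2 / 2 * (s - σ) ^ 2 := by
  set c := θ * ‖w‖ ^ 2 with hc
  set G : ℝ → ℝ := fun τ => ξ (p + τ • w) with hG
  set G1 : ℝ → ℝ := fun τ => fderiv ℝ ξ (p + τ • w) w with hG1
  have hB : ∀ τ : ℝ, fderiv ℝ (fderiv ℝ ξ) (p + τ • w) w w ≤ -c := by
    intro τ
    have h := huc (p + τ • w) w
    rw [iteratedFDeriv_two_apply] at h
    simp only [Matrix.cons_val_zero, Matrix.cons_val_one, Matrix.head_cons] at h
    linarith
  set ψ : ℝ → ℝ := fun τ => G1 σ - c * (τ - σ) - G1 τ with hψdef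
  have hψ : ∀ τ, HasDerivAt ψ (-c - fderiv ℝ (fderiv ℝ ξ) (p + τ • w) w w) τ := by
    intro τ
    have h2 : HasDerivAt (fun τ : ℝ => τ - σ) 1 τ := (hasDerivAt_id τ).sub_const σ
    have h3 : HasDerivAt (fun τ : ℝ => G1 σ - c * (τ - σ)) (-c) τ := by
      simpa using (h2.const_mul c).const_sub (G1 σ)
    exact h3.sub (line_hasDerivAt2 ξ hsm p w τ)
  have hψmono : Monotone ψ := by
    apply monotone_of_deriv_nonneg
    · exact fun τ => (hψ τ).differentiableAt
    · intro τ
      rw [(hψ τ).deriv]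
      linarith [hB τ]
  have hψσ : ψ σ = 0 := by simp [hψdef]
  set φ : ℝ → ℝ := fun τ => (G σ + G1 σ * (τ - σ) - c / 2 * (τ - σ) ^ 2) - G τ with hφdef
  have hφ' : ∀ τ, HasDerivAt φ (ψ τ) τ := by
    intro τ
    have h2 : HasDerivAt (fun τ : ℝ => τ - σ) 1 τ := (hasDerivAt_id τ).sub_const σ
    have h1 : HasDerivAt (fun τ : ℝ => G σ + G1 σ * (τ - σ) - c / 2 * (τ - σ) ^ 2)
        (G1 σ - c * (τ - σ)) τ := by
      have := ((h2.const_mul (G1 σ)).const_add (G σ)).sub ((h2.pow 2).const_mul (c / 2))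
      exact this.congr_deriv (by ring)
    have := h1.sub (line_hasDerivAt ξ hsm p w τ)
    exact this
  have hφσ : φ σ = 0 := by simp [hφdef]
  have key : 0 ≤ φ s := by
    rcases le_total σ s with h | h
    · have hmono : MonotoneOn φ (Icc σ s) := by
        apply monotoneOn_of_deriv_nonneg (convex_Icc σ s)
        · exact (fun τ _ => ((hφ' τ).differentiableAt.continuousAt.continuousWithinAt))
        · exact fun τ _ => (hφ' τ).differentiableAt.differentiableWithinAt
        · intro τ hτ
          rw [(hφ' τ).deriv]
          rw [interior_Icc] at hτ
          have := hψmono hτ.1.le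
          rw [hψσ] at this; exact this
      have := hmono (left_mem_Icc.2 h) (right_mem_Icc.2 h) h
      rwa [hφσ] at this
    · have hanti : AntitoneOn φ (Icc s σ) := by
        apply antitoneOn_of_deriv_nonpos (convex_Icc s σ)
        · exact (fun τ _ => ((hφ' τ).differentiableAt.continuousAt.continuousWithinAt))
        · exact fun τ _ => (hφ' τ).differentiableAt.differentiableWithinAt
        · intro τ hτ
          rw [(hφ' τ).deriv]
          rw [interior_Icc] at hτ
          have := hψmono hτ.2.le
          rw [hψσ] at this; exact this
      have := hanti (left_mem_Icc.2 h) (right_mem_Icc.2 h) h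
      rwa [hφσ] at this
  have hφs : φ s = (G σ + G1 σ * (s - σ) - c / 2 * (s - σ) ^ 2) - G s := rfl
  rw [hφs] at key
  have : G s ≤ G σ + G1 σ * (s - σ) - c / 2 * (s - σ) ^ 2 := by linarith
  simpa [hG, hG1, hc] using this.trans_eq (by ring)

lemma fderiv_eq_inner (ξ : E3 → ℝ) (y u : E3) :
    fderiv ℝ ξ y u = ⟪gradient ξ y, u⟫ := by
  rw [gradient, InnerProductSpace.toDual_symm_apply]

lemma nvec_norm (ξ : E3 → ℝ) (y : E3) (h : gradient ξ y ≠ 0) : ‖nvec ξ y‖ = 1 := by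
  rw [nvec, norm_smul]
  simp [norm_ne_zero_iff.2 h, inv_mul_cancel₀ (norm_ne_zero_iff.2 h)]

lemma inner_grad_nvec (ξ : E3 → ℝ) (y : E3) (h : gradient ξ y ≠ 0) :
    ⟪gradient ξ y, nvec ξ y⟫ = ‖gradient ξ y‖ := by
  rw [nvec, real_inner_smul_right, real_inner_self_eq_norm_sq]
  field_simp [norm_ne_zero_iff.2 h]

lemma fderiv_specR (ξ : E3 → ℝ) (y v : E3) (h : gradient ξ y ≠ 0) :
    fderiv ℝ ξ y (specR ξ y v) = -(fderiv ℝ ξ y v) := by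
  rw [fderiv_eq_inner, fderiv_eq_inner, specR, inner_sub_right, real_inner_smul_right,
    inner_grad_nvec ξ y h]
  rw [nvec, real_inner_smul_left]
  have hn : ‖gradient ξ y‖ ≠ 0 := norm_ne_zero_iff.2 h
  field_simp
  ring

lemma norm_specR (ξ : E3 → ℝ) (y v : E3) (h : gradient ξ y ≠ 0) :
    ‖specR ξ y v‖ = ‖v‖ := by
  have h1 : ‖specR ξ y v‖ ^ 2 = ‖v‖ ^ 2 := by
    rw [specR, norm_sub_sq_real, norm_smul, real_inner_smul_right]
    rw [mul_pow, nvec_norm ξ y h]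
    have : ⟪v, nvec ξ y⟫ = ⟪nvec ξ y, v⟫ := real_inner_comm _ _
    rw [this]
    simp [abs_mul, mul_pow, sq_abs]
    ring
  have h2 : ‖specR ξ y v‖ = ‖v‖ ∨ ‖specR ξ y v‖ = -‖v‖ := sq_eq_sq_iff_eq_or_eq_neg.mp h1
  rcases h2 with h2 | h2
  · exact h2
  · have := norm_nonneg (specR ξ y v)
    have := norm_nonneg v
    nlinarith [norm_nonneg (specR ξ y v)]

variable (ξ : E3 → ℝ) (x v : E3)

lemma tb_set_nonempty : (0:ℝ) ∈ {s : ℝ | 0 ≤ s ∧ ∀ τ ∈ Set.Ioo (0 : ℝ) s, x - τ • v ∈ domOmega ξ} := by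
  refine ⟨le_refl 0, fun τ hτ => absurd hτ.2 (not_lt.2 hτ.1.le)⟩

lemma tb_set_bdd (hits : HitsBdry ξ x v) :
    BddAbove {s : ℝ | 0 ≤ s ∧ ∀ τ ∈ Set.Ioo (0 : ℝ) s, x - τ • v ∈ domOmega ξ} := by
  obtain ⟨τ₀, hτ₀, hout⟩ := hits
  refine ⟨τ₀, fun s hs => ?_⟩
  by_contra hlt
  push_neg at hlt
  exact hout (hs.2 τ₀ ⟨hτ₀, hlt⟩)

lemma tb_interior (hits : HitsBdry ξ x v) :
    ∀ τ ∈ Set.Ioo (0:ℝ) (tb ξ x v), ξ (x - τ • v) < 0 := by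
  intro τ hτ
  obtain ⟨s, hs, hlt⟩ := exists_lt_of_lt_csSup ⟨0, tb_set_nonempty ξ x v⟩ hτ.2
  exact hs.2 τ ⟨hτ.1, hlt⟩

lemma tb_pos (hξcont : Continuous ξ) (hx : ξ x < 0) (hits : HitsBdry ξ x v) : 0 < tb ξ x v := by
  have hc : Continuous fun τ : ℝ => ξ (x - τ • v) :=
    hξcont.comp (continuous_const.sub (continuous_id.smul continuous_const))
  have hev : ∀ᶠ τ in nhds (0:ℝ), ξ (x - τ • v) < 0 := by
    have : Set.Iio (0:ℝ) ∈ nhds (ξ (x - (0:ℝ) • v)) := Iio_mem_nhds (by simpa using hx)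
    exact (hc.tendsto 0).eventually_mem this
  obtain ⟨δ, hδpos, hδ⟩ := Metric.eventually_nhds_iff.1 hev
  have hmem : δ/2 ∈ {s : ℝ | 0 ≤ s ∧ ∀ τ ∈ Set.Ioo (0 : ℝ) s, x - τ • v ∈ domOmega ξ} := by
    refine ⟨by positivity, fun τ hτ => ?_⟩
    have : dist τ 0 < δ := by
      rw [Real.dist_eq, sub_zero, abs_of_pos hτ.1]
      linarith [hτ.2]
    exact hδ this
  calc (0:ℝ) < δ/2 := by positivity
  _ ≤ tb ξ x v := le_csSup (tb_set_bdd ξ x v hits) hmem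

lemma xb_zero (hξcont : Continuous ξ) (hx : ξ x < 0) (hits : HitsBdry ξ x v) :
    ξ (xbpos ξ x v) = 0 := by
  have hc : Continuous fun τ : ℝ => ξ (x - τ • v) :=
    hξcont.comp (continuous_const.sub (continuous_id.smul continuous_const))
  have htb := tb_pos ξ x v hξcont hx hits
  have hle : ξ (xbpos ξ x v) ≤ 0 := by
    have hsub : Set.Ioo (0:ℝ) (tb ξ x v) ⊆ {τ : ℝ | ξ (x - τ • v) ≤ 0} :=
      fun τ hτ => (tb_interior ξ x v hits τ hτ).le
    have hcl : tb ξ x v ∈ closure (Set.Ioo (0:ℝ) (tb ξ x v)) := by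
      rw [closure_Ioo (ne_of_lt htb)]
      exact ⟨htb.le, le_refl _⟩
    have := (IsClosed.closure_subset_iff (isClosed_le hc continuous_const)).2 hsub hcl
    simpa [xbpos] using this
  rcases lt_or_eq_of_le hle with hlt | heq
  · exfalso
    have hev : ∀ᶠ τ in nhds (tb ξ x v), ξ (x - τ • v) < 0 := by
      have : Set.Iio (0:ℝ) ∈ nhds (ξ (x - tb ξ x v • v)) := Iio_mem_nhds (by simpa [xbpos] using hlt)
      exact (hc.tendsto _).eventually_mem this
    obtain ⟨δ, hδpos, hδ⟩ := Metric.eventually_nhds_iff.1 hev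
    have hmem : tb ξ x v + δ/2 ∈
        {s : ℝ | 0 ≤ s ∧ ∀ τ ∈ Set.Ioo (0 : ℝ) s, x - τ • v ∈ domOmega ξ} := by
      refine ⟨by linarith, fun τ hτ => ?_⟩
      rcases lt_or_ge τ (tb ξ x v) with h | h
      · exact tb_interior ξ x v hits τ ⟨hτ.1, h⟩
      · apply hδ
        rw [Real.dist_eq, abs_of_nonneg (by linarith)]
        linarith [hτ.2]
    have := le_csSup (tb_set_bdd ξ x v hits) hmem
    have htb' : tb ξ x v + δ/2 ≤ tb ξ x v := this
    linarith
  · exact heq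


lemma slope_comp (q : ℝ → ℝ) (T τ : ℝ) : slope q T τ = (q τ - q T) / (τ - T) := by
  rw [slope_def_field]

lemma fderiv_xb_nonpos (ξ : E3 → ℝ) (hsm : ContDiff ℝ (⊤ : ℕ∞) ξ) (x v : E3)
    (hx : ξ x < 0) (hits : HitsBdry ξ x v) :
    fderiv ℝ ξ (xbpos ξ x v) v ≤ 0 := by
  classical
  set T := tb ξ x v with hT
  have hTpos : 0 < T := tb_pos ξ x v hsm.continuous hx hits
  have hline : ∀ τ : ℝ, x + τ • (-v) = x - τ • v := by
    intro τ; rw [smul_neg, sub_eq_add_neg]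
  have hq : HasDerivAt (fun τ : ℝ => ξ (x + τ • (-v)))
      (fderiv ℝ ξ (x + T • (-v)) (-v)) T := line_hasDerivAt ξ hsm x (-v) T
  have hxb : x + T • (-v) = xbpos ξ x v := by rw [hline]; rfl
  rw [hxb] at hq
  have hslope := hasDerivAt_iff_tendsto_slope.1 hq
  have hmono : nhdsWithin T (Set.Iio T) ≤ nhdsWithin T {T}ᶜ :=
    nhdsWithin_mono T (fun y hy => ne_of_lt hy)
  have hslope' := hslope.mono_left hmono
  have hev : ∀ᶠ τ in nhdsWithin T (Set.Iio T),
      0 ≤ slope (fun τ : ℝ => ξ (x + τ • (-v))) T τ := by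
    filter_upwards [Ioo_mem_nhdsLT_of_mem (⟨hTpos, le_refl T⟩ : T ∈ Set.Ioc 0 T)] with τ hτ
    rw [slope_comp]
    have h1 : ξ (x + τ • (-v)) < 0 := by rw [hline]; exact tb_interior ξ x v hits τ hτ
    have h2 : ξ (x + T • (-v)) = 0 := by
      rw [hxb]; exact xb_zero ξ x v hsm.continuous hx hits
    rw [h2, sub_zero]
    exact le_of_lt (div_pos_of_neg_of_neg h1 (by linarith [hτ.2]))
  have hge : 0 ≤ fderiv ℝ ξ (xbpos ξ x v) (-v) := ge_of_tendsto hslope' hev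
  rw [map_neg] at hge
  linarith

lemma fderiv_line_lower (ξ : E3 → ℝ) (θ : ℝ) (hsm : ContDiff ℝ (⊤ : ℕ∞) ξ)
    (huc : ∀ x ζ : E3, θ * ‖ζ‖ ^ 2 ≤ -(iteratedFDeriv ℝ 2 ξ x ![ζ, ζ]))
    (p w : E3) (σ s : ℝ) (h : s ≤ σ) :
    fderiv ℝ ξ (p + σ • w) w + θ * ‖w‖ ^ 2 * (σ - s) ≤ fderiv ℝ ξ (p + s • w) w := by
  set c := θ * ‖w‖ ^ 2 with hc
  have hψ : ∀ τ : ℝ, HasDerivAt (fun τ : ℝ => fderiv ℝ ξ (p + τ • w) w + c * τ)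
      (fderiv ℝ (fderiv ℝ ξ) (p + τ • w) w w + c) τ := by
    intro τ
    exact (line_hasDerivAt2 ξ hsm p w τ).add (by simpa using (hasDerivAt_id τ).const_mul c)
  have hanti : Antitone (fun τ : ℝ => fderiv ℝ ξ (p + τ • w) w + c * τ) := by
    apply antitone_of_deriv_nonpos
    · exact fun τ => (hψ τ).differentiableAt
    · intro τ
      rw [(hψ τ).deriv]
      have hb := huc (p + τ • w) w
      rw [iteratedFDeriv_two_apply] at hb
      simp only [Matrix.cons_val_zero, Matrix.cons_val_one, Matrix.head_cons] at hb
      linarith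
  have := hanti h
  simp only at this
  linarith

lemma traj_xi_bound (ξ : E3 → ℝ) (θ : ℝ) (hθ : 0 < θ) (hsm : ContDiff ℝ (⊤ : ℕ∞) ξ)
    (huc : ∀ x ζ : E3, θ * ‖ζ‖ ^ 2 ≤ -(iteratedFDeriv ℝ 2 ξ x ![ζ, ζ]))
    (hgrad : ∀ y : E3, ξ y = 0 → gradient ξ y ≠ 0)
    (t : ℝ) (x v : E3) (hx : ξ x < 0) (hv : v ≠ 0) :
    ∃ σ : ℝ, ∀ s ∈ Set.Icc (0:ℝ) t, ξ (Xtr ξ s t x v) ≤ -(θ * ‖v‖ ^ 2 / 2) * (s - σ) ^ 2 := by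
  classical
  have hc0 : 0 < θ * ‖v‖ ^ 2 := by
    have : 0 < ‖v‖ := norm_pos_iff.2 hv
    positivity
  by_cases hits : HitsBdry ξ x v
  · -- hit case
    set T := tb ξ x v with hT
    have hxb0 : ξ (xbpos ξ x v) = 0 := xb_zero ξ x v hsm.continuous hx hits
    have hgradxb : gradient ξ (xbpos ξ x v) ≠ 0 := hgrad _ hxb0
    refine ⟨t - T, fun s _ => ?_⟩
    by_cases hcond : s ≤ t - T
    · -- reflected piece
      set Rv := specR ξ (xbpos ξ x v) v with hRv
      have hXtr : Xtr ξ s t x v = (xbpos ξ x v - (t - T) • Rv) + s • Rv := by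
        rw [Xtr, if_pos ⟨hits, hcond⟩]
        module
      have hbase : (xbpos ξ x v - (t - T) • Rv) + (t - T) • Rv = xbpos ξ x v := by module
      have hsc := strongConc ξ θ hsm huc (xbpos ξ x v - (t - T) • Rv) Rv (t - T) s
      rw [hbase, hxb0, fderiv_specR ξ _ v hgradxb, norm_specR ξ _ v hgradxb] at hsc
      rw [hXtr]
      have hterm : -(fderiv ℝ ξ (xbpos ξ x v) v) * (s - (t - T)) ≤ 0 := by
        apply mul_nonpos_of_nonneg_of_nonpos
        · linarith [fderiv_xb_nonpos ξ hsm x v hx hits]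
        · linarith
      linarith
    · -- incoming straight piece
      have hXtr : Xtr ξ s t x v = (x - t • v) + s • v := by
        rw [Xtr, if_neg (fun h => hcond h.2)]
        module
      have hbase : (x - t • v) + (t - T) • v = xbpos ξ x v := by rw [xbpos]; module
      have hsc := strongConc ξ θ hsm huc (x - t • v) v (t - T) s
      rw [hbase, hxb0] at hsc
      rw [hXtr]
      have hterm : fderiv ℝ ξ (xbpos ξ x v) v * (s - (t - T)) ≤ 0 := by
        apply mul_nonpos_of_nonpos_of_nonneg
        · exact fderiv_xb_nonpos ξ hsm x v hx hits
        · linarith [not_le.1 hcond]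
      linarith
  · -- no hit case
    have hall : ∀ τ : ℝ, 0 < τ → ξ (x - τ • v) < 0 := by
      intro τ hτ
      by_contra hge
      exact hits ⟨τ, hτ, fun hmem => hge hmem⟩
    have hX : ∀ s : ℝ, Xtr ξ s t x v = (x - t • v) + s • v := by
      intro s
      rw [Xtr, if_neg (fun h => hits h.1)]
      module
    have hpt : (x - t • v) + t • v = x := by module
    set p := x - t • v with hp
    set G1 : ℝ → ℝ := fun τ => fderiv ℝ ξ (p + τ • v) v with hG1
    by_cases h0 : 0 ≤ G1 t
    · refine ⟨t, fun s hs => ?_⟩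
      have hsc := strongConc ξ θ hsm huc p v t s
      rw [hpt] at hsc
      rw [hX s]
      have hterm : G1 t * (s - t) ≤ 0 :=
        mul_nonpos_of_nonneg_of_nonpos h0 (by linarith [hs.2])
      have hGt : fderiv ℝ ξ x v = G1 t := by
        show fderiv ℝ ξ x v = fderiv ℝ ξ (p + t • v) v
        rw [hpt]
      rw [hGt] at hsc
      linarith
    · push_neg at h0
      set c := θ * ‖v‖ ^ 2 with hc
      set s₁ := t + G1 t / c - 1 with hs₁def
      have hs₁t : s₁ ≤ t := by
        have : G1 t / c < 0 := div_neg_of_neg_of_pos h0 hc0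
        simp only [hs₁def]
        linarith
      have hlow := fderiv_line_lower ξ θ hsm huc p v t s₁ hs₁t
      have hG1s₁ : c ≤ G1 s₁ := by
        have harith : c * (t - s₁) = c - G1 t := by
          have hcc : c * (G1 t / c) = G1 t := by field_simp [hc0.ne']
          rw [hs₁def]
          linear_combination (-1 : ℝ) * hcc
        have : G1 t + c * (t - s₁) ≤ G1 s₁ := hlow
        rw [harith] at this
        linarith
      have hcont : ContinuousOn G1 (Set.Icc s₁ t) :=
        fun τ _ => ((line_hasDerivAt2 ξ hsm p v τ).differentiableAt.continuousAt).continuousWithinAt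
      have hmem0 : (0:ℝ) ∈ Set.Icc (G1 t) (G1 s₁) := ⟨h0.le, by linarith⟩
      obtain ⟨σ, hσmem, hσval⟩ := intermediate_value_Icc' hs₁t hcont hmem0
      refine ⟨σ, fun s _ => ?_⟩
      have hσt : σ < t := by
        rcases lt_or_eq_of_le hσmem.2 with h | h
        · exact h
        · exfalso; rw [h] at hσval; rw [hσval] at h0; exact lt_irrefl 0 h0
      have hξσ : ξ (p + σ • v) < 0 := by
        have : p + σ • v = x - (t - σ) • v := by rw [hp]; module
        rw [this]
        exact hall (t - σ) (by linarith)
      have hsc := strongConc ξ θ hsm huc p v σ s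
      rw [hX s]
      have : fderiv ℝ ξ (p + σ • v) v = G1 σ := rfl
      rw [this, hσval] at hsc
      simp only [hc]
      linarith

lemma bdry_subset_closure (ξ : E3 → ℝ) (hsm : ContDiff ℝ (⊤ : ℕ∞) ξ)
    (hgrad : ∀ y : E3, ξ y = 0 → gradient ξ y ≠ 0) :
    bdryOmega ξ ⊆ closure {x : E3 | 0 < ξ x} := by
  intro y hy
  have hy0 : ξ y = 0 := hy
  set g := gradient ξ y with hg
  have hgne : g ≠ 0 := hgrad y hy0
  have hgpos : 0 < ‖g‖ ^ 2 := by
    have : 0 < ‖g‖ := norm_pos_iff.2 hgne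
    positivity
  have hq : HasDerivAt (fun τ : ℝ => ξ (y + τ • g)) (fderiv ℝ ξ (y + (0:ℝ) • g) g) 0 :=
    line_hasDerivAt ξ hsm y g 0
  have hd : fderiv ℝ ξ (y + (0:ℝ) • g) g = ‖g‖ ^ 2 := by
    rw [zero_smul, add_zero, fderiv_eq_inner, ← hg, real_inner_self_eq_norm_sq]
  rw [hd] at hq
  have hslope := (hasDerivAt_iff_tendsto_slope.1 hq).mono_left
    (nhdsWithin_mono (0:ℝ) (fun τ (hτ : τ ∈ Set.Ioi (0:ℝ)) => ne_of_gt hτ))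
  rw [Metric.mem_closure_iff]
  intro δ hδ
  have hev1 : ∀ᶠ τ in nhdsWithin (0:ℝ) (Set.Ioi 0),
      0 < slope (fun τ : ℝ => ξ (y + τ • g)) 0 τ :=
    hslope.eventually (eventually_gt_nhds hgpos)
  have hev2 : ∀ᶠ τ in nhdsWithin (0:ℝ) (Set.Ioi 0), τ ∈ Set.Ioo 0 (δ / (‖g‖ + 1)) := by
    apply Ioo_mem_nhdsGT_of_mem
    constructor
    · exact le_refl _
    · positivity
  obtain ⟨τ, hτ1, hτ2⟩ := (hev1.and hev2).exists
  refine ⟨y + τ • g, ?_, ?_⟩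
  · have := hτ1
    rw [slope_comp] at this
    simp only [zero_smul, add_zero, hy0, sub_zero] at this
    have hτpos : 0 < τ := hτ2.1
    have : 0 < ξ (y + τ • g) := by
      have h2 := mul_pos this hτpos
      rw [div_mul_cancel₀] at h2
      · exact h2
      · exact ne_of_gt hτpos
    exact this
  · rw [dist_eq_norm]
    simp only [sub_add_cancel_left, norm_neg]
    rw [norm_smul, Real.norm_eq_abs, abs_of_pos hτ2.1]
    calc τ * ‖g‖ ≤ τ * (‖g‖ + 1) := by nlinarith [hτ2.1]
    _ < δ / (‖g‖ + 1) * (‖g‖ + 1) := by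
        apply mul_lt_mul_of_pos_right hτ2.2 (by positivity)
    _ = δ := by field_simp

lemma log_dist_bound (ξ : E3 → ℝ) (hsm : ContDiff ℝ (⊤ : ℕ∞) ξ)
    (hgrad : ∀ y : E3, ξ y = 0 → gradient ξ y ≠ 0)
    (hbdd : Bornology.IsBounded {x : E3 | 0 < ξ x}) (hne : (bdryOmega ξ).Nonempty) :
    ∃ L : ℝ, 0 ≤ L ∧ ∀ y : E3, ξ y ≤ 0 →
      Real.log (1 + 1 / Metric.infDist y (bdryOmega ξ)) ≤
        Real.log 2 + Real.log (1 + L / (-ξ y)) := by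
  have hclosed : IsClosed (bdryOmega ξ) := isClosed_eq hsm.continuous continuous_const
  have hbdd2 : Bornology.IsBounded (bdryOmega ξ) :=
    (hbdd.closure).subset (bdry_subset_closure ξ hsm hgrad)
  obtain ⟨R, hR⟩ := hbdd2.subset_closedBall (0 : E3)
  have hcompact : IsCompact (bdryOmega ξ) := by
    rw [Metric.isCompact_iff_isClosed_bounded]
    exact ⟨hclosed, hbdd2⟩
  set B := Metric.closedBall (0 : E3) (|R| + 2) with hB
  have hOmem : (0 : E3) ∈ B := by
    simp only [hB, Metric.mem_closedBall, dist_self]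
    positivity
  have hcontF : Continuous fun y : E3 => ‖fderiv ℝ ξ y‖ :=
    (hsm.continuous_fderiv (by simp)).norm
  obtain ⟨z₀, hz₀B, hmax'⟩ := (isCompact_closedBall (0:E3) (|R| + 2)).exists_isMaxOn
    ⟨0, hOmem⟩ hcontF.continuousOn
  have hmax : ∀ w ∈ Metric.closedBall (0:E3) (|R| + 2), ‖fderiv ℝ ξ w‖ ≤ ‖fderiv ℝ ξ z₀‖ :=
    fun w hw => hmax' hw
  set L := ‖fderiv ℝ ξ z₀‖ with hL
  refine ⟨L, norm_nonneg _, fun y hy => ?_⟩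
  have hlog2 : (0:ℝ) ≤ Real.log 2 := Real.log_nonneg (by norm_num)
  have hlogL : (0:ℝ) ≤ Real.log (1 + L / (-ξ y)) := by
    apply Real.log_nonneg
    have : 0 ≤ L / (-ξ y) := div_nonneg (norm_nonneg _) (by linarith)
    linarith
  rcases eq_or_lt_of_le hy with hy0 | hyneg
  · -- on the boundary
    have hmem : y ∈ bdryOmega ξ := by simpa [bdryOmega] using hy0
    rw [Metric.infDist_zero_of_mem hmem]
    simp only [div_zero, add_zero, Real.log_one]
    linarith
  · by_cases hD : 1 ≤ Metric.infDist y (bdryOmega ξ)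
    · have h1 : 1 / Metric.infDist y (bdryOmega ξ) ≤ 1 := by
        rw [div_le_one (by linarith)]
        exact hD
      have : Real.log (1 + 1 / Metric.infDist y (bdryOmega ξ)) ≤ Real.log 2 := by
        apply Real.log_le_log (by positivity)
        linarith
      linarith
    · push_neg at hD
      obtain ⟨z, hzmem, hdz⟩ := hcompact.exists_infDist_eq_dist hne y
      have hzB : z ∈ B := by
        simp only [hB, Metric.mem_closedBall, dist_zero_right]
        have := hR hzmem
        simp only [Metric.mem_closedBall, dist_zero_right] at this
        have : ‖z‖ ≤ |R| := le_trans this (le_abs_self R)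
        linarith
      have hyB : y ∈ B := by
        simp only [hB, Metric.mem_closedBall, dist_zero_right]
        have h1 : ‖y‖ ≤ ‖y - z‖ + ‖z‖ := by
          calc ‖y‖ = ‖y - z + z‖ := by rw [sub_add_cancel]
          _ ≤ ‖y - z‖ + ‖z‖ := norm_add_le _ _
        have h2 : ‖y - z‖ = dist y z := (dist_eq_norm y z).symm
        have h3 : dist y z < 1 := by rw [← hdz]; exact hD
        have hz2 : ‖z‖ ≤ |R| := by
          have := hR hzmem
          simp only [Metric.mem_closedBall, dist_zero_right] at this
          exact le_trans this (le_abs_self R)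
        linarith
      have hlip : ‖ξ y - ξ z‖ ≤ L * ‖y - z‖ := by
        apply (convex_closedBall _ _).norm_image_sub_le_of_norm_fderiv_le
          (fun w _ => (hsm.differentiable (by simp)).differentiableAt)
          (fun w hw => hmax w hw) hzB hyB
      have hzz : ξ z = 0 := hzmem
      have hkey : -ξ y ≤ L * Metric.infDist y (bdryOmega ξ) := by
        have h1 : -ξ y = ξ z - ξ y := by rw [hzz]; ring
        have h2 : ξ z - ξ y ≤ |ξ y - ξ z| := by
          rw [abs_sub_comm]
          exact le_abs_self _
        have h3 : |ξ y - ξ z| = ‖ξ y - ξ z‖ := rfl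
        rw [hdz, dist_eq_norm]
        linarith [hlip]
      have hDpos : 0 < Metric.infDist y (bdryOmega ξ) := by
        rcases lt_or_ge 0 (Metric.infDist y (bdryOmega ξ)) with h | h
        · exact h
        · exfalso
          have : L * Metric.infDist y (bdryOmega ξ) ≤ 0 :=
            mul_nonpos_of_nonneg_of_nonpos (norm_nonneg _) h
          linarith
      have hfrac : 1 / Metric.infDist y (bdryOmega ξ) ≤ L / (-ξ y) := by
        rw [div_le_div_iff₀ hDpos (by linarith)]
        linarith
      have : Real.log (1 + 1 / Metric.infDist y (bdryOmega ξ)) ≤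
          Real.log (1 + L / (-ξ y)) := by
        apply Real.log_le_log (by positivity)
        linarith
      linarith


section BallLemmas
variable (ξ : E3 → ℝ)

lemma ball_in_omega (hcont : Continuous ξ) (x y : E3) (hx : ξ x < 0)
    (h : dist y x < Metric.infDist x (bdryOmega ξ)) : ξ y < 0 := by
  by_contra hge
  push_neg at hge
  rcases eq_or_lt_of_le hge with h0 | hpos
  · have hmem : y ∈ bdryOmega ξ := by simpa [bdryOmega] using h0.symm
    have := Metric.infDist_le_dist_of_mem hmem (x := x)
    rw [dist_comm] at this
    linarith
  · -- IVT on the segment from x to y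
    have hseg : Continuous fun τ : ℝ => ξ (x + τ • (y - x)) :=
      hcont.comp (continuous_const.add (continuous_id.smul continuous_const))
    have h0' : ξ (x + (0:ℝ) • (y - x)) < 0 := by simpa using hx
    have h1' : 0 < ξ (x + (1:ℝ) • (y - x)) := by simpa using hpos
    have hmem0 : (0:ℝ) ∈ Set.Icc (ξ (x + (0:ℝ) • (y - x))) (ξ (x + (1:ℝ) • (y - x))) :=
      ⟨h0'.le, h1'.le⟩
    obtain ⟨τ, hτmem, hτval⟩ := intermediate_value_Icc (by norm_num : (0:ℝ) ≤ 1)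
      hseg.continuousOn hmem0
    have hzmem : x + τ • (y - x) ∈ bdryOmega ξ := by simpa [bdryOmega] using hτval
    have hd := Metric.infDist_le_dist_of_mem hzmem (x := x)
    have hdist : dist x (x + τ • (y - x)) ≤ dist y x := by
      rw [dist_eq_norm, dist_eq_norm]
      have : x - (x + τ • (y - x)) = (-τ) • (y - x) := by module
      rw [this, norm_smul, Real.norm_eq_abs, abs_neg, abs_of_nonneg hτmem.1]
      have h2 : ‖y - x‖ = ‖y - x‖ := rfl
      calc τ * ‖y - x‖ ≤ 1 * ‖y - x‖ := by
            apply mul_le_mul_of_nonneg_right hτmem.2 (norm_nonneg _)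
      _ = ‖y - x‖ := by ring
      _ = dist y x := (dist_eq_norm y x).symm
    linarith

lemma tb_large (hcont : Continuous ξ) (x v : E3) (hx : ξ x < 0) (hits : HitsBdry ξ x v)
    (hv : v ≠ 0) : Metric.infDist x (bdryOmega ξ) / ‖v‖ ≤ tb ξ x v := by
  apply le_csSup (tb_set_bdd ξ x v hits)
  constructor
  · exact div_nonneg Metric.infDist_nonneg (norm_nonneg v)
  · intro τ hτ
    apply ball_in_omega ξ hcont x (x - τ • v) hx
    rw [dist_eq_norm]
    have : x - τ • v - x = (-τ) • v := by module
    rw [this, norm_smul, Real.norm_eq_abs, abs_neg, abs_of_pos hτ.1]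
    have hvpos : 0 < ‖v‖ := norm_pos_iff.2 hv
    have := hτ.2
    calc τ * ‖v‖ < Metric.infDist x (bdryOmega ξ) / ‖v‖ * ‖v‖ :=
      mul_lt_mul_of_pos_right this hvpos
    _ = Metric.infDist x (bdryOmega ξ) := by field_simp

end BallLemmas

namespace SingAux

lemma rpow_neg_half_of_nonpos {b : ℝ} (hb : b ≤ 0) : b ^ (-(1/2) : ℝ) = 0 := by
  rcases lt_or_eq_of_le hb with h | h
  · rw [Real.rpow_def_of_neg h]
    have : Real.cos (-(1/2) * Real.pi) = 0 := by
      rw [show (-(1/2) : ℝ) * Real.pi = -(Real.pi/2) by ring, Real.cos_neg, Real.cos_pi_div_two]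
    rw [this, mul_zero]
  · rw [h, Real.zero_rpow (by norm_num)]

lemma rpow_half_of_neg {b : ℝ} (hb : b < 0) : b ^ ((1/2) : ℝ) = 0 := by
  rw [Real.rpow_def_of_neg hb]
  have : Real.cos ((1/2) * Real.pi) = 0 := by
    rw [show ((1/2) : ℝ) * Real.pi = Real.pi/2 by ring, Real.cos_pi_div_two]
  rw [this, mul_zero]

lemma rpow_neg_half_pos {b : ℝ} (hb : 0 < b) : b ^ (-(1/2) : ℝ) = (Real.sqrt b)⁻¹ := by
  rw [Real.rpow_neg hb.le, Real.sqrt_eq_rpow]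

lemma rpow_shift_integrable (σ a b : ℝ) :
    IntervalIntegrable (fun x => (x - σ) ^ (-(1/2) : ℝ)) volume a b := by
  have h := intervalIntegral.intervalIntegrable_rpow'
    (a := a - σ) (b := b - σ) (r := -(1/2)) (by norm_num)
  simpa using h.comp_sub_right σ

lemma rpow_shift_integrable' (σ a b : ℝ) :
    IntervalIntegrable (fun x => (σ - x) ^ (-(1/2) : ℝ)) volume a b := by
  have h := intervalIntegral.intervalIntegrable_rpow'
    (a := σ - a) (b := σ - b) (r := -(1/2)) (by norm_num)
  simpa using h.comp_sub_left σ

/-- the singular weight -/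
def w (σ s : ℝ) : ℝ := (s - σ) ^ (-(1/2) : ℝ) + (σ - s) ^ (-(1/2) : ℝ)

lemma w_nonneg (σ s : ℝ) : 0 ≤ w σ s := by
  unfold w
  rcases le_total s σ with h | h
  · rw [rpow_neg_half_of_nonpos (by linarith : s - σ ≤ 0)]
    have : (0:ℝ) ≤ (σ - s) ^ (-(1/2) : ℝ) := Real.rpow_nonneg (by linarith) _
    linarith
  · rw [rpow_neg_half_of_nonpos (by linarith : σ - s ≤ 0)]
    have : (0:ℝ) ≤ (s - σ) ^ (-(1/2) : ℝ) := Real.rpow_nonneg (by linarith) _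
    linarith

lemma w_eq_of_gt {σ s : ℝ} (h : σ < s) : w σ s = (Real.sqrt (s - σ))⁻¹ := by
  unfold w
  rw [rpow_neg_half_of_nonpos (by linarith : σ - s ≤ 0), add_zero,
    rpow_neg_half_pos (by linarith : (0:ℝ) < s - σ)]

lemma w_eq_of_lt {σ s : ℝ} (h : s < σ) : w σ s = (Real.sqrt (σ - s))⁻¹ := by
  unfold w
  rw [rpow_neg_half_of_nonpos (by linarith : s - σ ≤ 0), zero_add,
    rpow_neg_half_pos (by linarith : (0:ℝ) < σ - s)]

lemma w_self (σ : ℝ) : w σ σ = 0 := by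
  unfold w
  rw [sub_self, Real.zero_rpow (by norm_num)]
  norm_num

lemma w_intervalIntegrable (σ a b : ℝ) : IntervalIntegrable (w σ) volume a b := by
  unfold w
  apply IntervalIntegrable.add
  · exact rpow_shift_integrable σ _ _
  · exact rpow_shift_integrable' σ _ _

lemma w_integral_symm (σ r : ℝ) (hr : 0 ≤ r) :
    ∫ s in (σ - r)..(σ + r), w σ s = 4 * Real.sqrt r := by
  unfold w
  rw [intervalIntegral.integral_add]
  · have h1 : (∫ s in (σ - r)..(σ + r), (s - σ) ^ (-(1/2):ℝ)) = 2 * Real.sqrt r := by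
      rw [intervalIntegral.integral_comp_sub_right (fun u => u ^ (-(1/2):ℝ)) σ]
      have : σ - r - σ = -r := by ring
      rw [this, show σ + r - σ = r by ring]
      rw [integral_rpow (Or.inl (by norm_num))]
      rw [show (-(1/2) : ℝ) + 1 = 1/2 by norm_num]
      rcases eq_or_lt_of_le hr with h | h
      · rw [← h]; norm_num
      · rw [rpow_half_of_neg (by linarith : -r < 0), Real.sqrt_eq_rpow]
        ring
    have h2 : (∫ s in (σ - r)..(σ + r), (σ - s) ^ (-(1/2):ℝ)) = 2 * Real.sqrt r := by
      rw [intervalIntegral.integral_comp_sub_left (fun u => u ^ (-(1/2):ℝ)) σ]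
      rw [show σ - (σ + r) = -r by ring, show σ - (σ - r) = r by ring]
      rw [integral_rpow (Or.inl (by norm_num))]
      rw [show (-(1/2) : ℝ) + 1 = 1/2 by norm_num]
      rcases eq_or_lt_of_le hr with h | h
      · rw [← h]; norm_num
      · rw [rpow_half_of_neg (by linarith : -r < 0), Real.sqrt_eq_rpow]
        ring
    rw [h1, h2]
    ring
  · exact rpow_shift_integrable σ _ _
  · exact rpow_shift_integrable' σ _ _

lemma log_le_two_sqrt {z : ℝ} (hz : 0 ≤ z) : Real.log (1 + z) ≤ 2 * Real.sqrt z := by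
  have h1 : Real.log (1 + z) = 2 * Real.log (Real.sqrt (1 + z)) := by
    rw [Real.log_sqrt (by linarith)]
    ring
  have h2 : Real.log (Real.sqrt (1 + z)) ≤ Real.sqrt (1 + z) - 1 :=
    Real.log_le_sub_one_of_pos (Real.sqrt_pos.2 (by linarith))
  have h3 : Real.sqrt (1 + z) ≤ 1 + Real.sqrt z := by
    rw [show (1:ℝ) + Real.sqrt z = Real.sqrt ((1 + Real.sqrt z)^2) from
      (Real.sqrt_sq (by positivity)).symm]
    apply Real.sqrt_le_sqrt
    have : Real.sqrt z ^ 2 = z := Real.sq_sqrt hz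
    nlinarith [Real.sqrt_nonneg z]
  linarith

lemma exp_integral_le {a t : ℝ} (ha : 0 < a) :
    ∫ s in (0:ℝ)..t, Real.exp (-(a * (t - s))) ≤ 1 / a := by
  have hF : ∀ u ∈ Set.uIcc (0:ℝ) t, HasDerivAt (fun s => Real.exp (a * s - a * t) / a)
      (Real.exp (-(a * (t - u)))) u := by
    intro u _
    have h1 : HasDerivAt (fun s : ℝ => a * s - a * t) a u := by
      simpa using ((hasDerivAt_id u).const_mul a).sub_const (a * t)
    have h2 := (h1.exp).div_const a
    refine h2.congr_deriv ?_
    rw [show -(a * (t - u)) = a * u - a * t by ring]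
    field_simp
  have hcont : IntervalIntegrable (fun s => Real.exp (-(a * (t - s)))) volume 0 t :=
    (Real.continuous_exp.comp (by continuity)).intervalIntegrable 0 t
  rw [intervalIntegral.integral_eq_sub_of_hasDerivAt hF hcont]
  have h0 : 0 < Real.exp (a * 0 - a * t) / a := by positivity
  have h1 : Real.exp (a * t - a * t) / a = 1 / a := by
    rw [sub_self, Real.exp_zero]
  rw [h1]
  linarith

lemma exp_intervalIntegrable (a t b c : ℝ) :
    IntervalIntegrable (fun s => Real.exp (-(a * (t - s)))) volume b c :=
  (Real.continuous_exp.comp (by continuity)).intervalIntegrable b c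

/-- Master integral estimate. -/
lemma master_integral {a t σ K : ℝ} (ha : 1 ≤ a) (ht : 0 ≤ t) (hK : 0 ≤ K)
    {f : ℝ → ℝ} (hfint : IntervalIntegrable f volume 0 t)
    (hbound : ∀ s ∈ Set.Icc (0:ℝ) t, s ≠ σ →
      f s ≤ Real.exp (-(a * (t - s))) * K + 4 * (Real.exp (-(a * (t - s))) * w σ s)) :
    ∫ s in (0:ℝ)..t, f s ≤ (K + 20) / Real.sqrt a := by
  have ha0 : 0 < a := by linarith
  have hsa : 0 < Real.sqrt a := Real.sqrt_pos.2 ha0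
  set E : ℝ → ℝ := fun s => Real.exp (-(a * (t - s))) with hE
  have hEcont : Continuous E := Real.continuous_exp.comp (by continuity)
  have hEint : IntervalIntegrable E volume 0 t := hEcont.intervalIntegrable 0 t
  have hwint : IntervalIntegrable (w σ) volume 0 t := w_intervalIntegrable σ 0 t
  have hEwint : IntervalIntegrable (fun s => E s * w σ s) volume 0 t := by
    apply IntervalIntegrable.continuousOn_mul hwint hEcont.continuousOn
  set g : ℝ → ℝ := fun s => E s * K + 4 * (E s * w σ s) with hg
  have hgint : IntervalIntegrable g volume 0 t := by
    apply IntervalIntegrable.add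
    · exact hEint.mul_const K
    · exact hEwint.const_mul 4
  have h1 : ∫ s in (0:ℝ)..t, f s ≤ ∫ s in (0:ℝ)..t, g s := by
    apply intervalIntegral.integral_mono_ae_restrict ht hfint hgint
    have hae : ∀ᵐ s ∂(volume.restrict (Set.Icc (0:ℝ) t)), s ≠ σ := by
      apply ae_restrict_of_ae
      rw [Filter.eventually_iff, mem_ae_iff]
      have hs : {x : ℝ | x ≠ σ}ᶜ = {σ} := by ext u; simp
      rw [hs]
      exact Real.volume_singleton
    filter_upwards [hae, ae_restrict_mem measurableSet_Icc] with s hne hmem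
    exact hbound s hmem hne
  -- bound ∫ g
  have hintE : ∫ s in (0:ℝ)..t, E s ≤ 1 / a := exp_integral_le ha0
  have hintEnn : 0 ≤ ∫ s in (0:ℝ)..t, E s := by
    apply intervalIntegral.integral_nonneg ht
    intro u _; positivity
  -- bound ∫ E * w
  set r' : ℝ := 1 / a with hr'
  have hr'pos : 0 < r' := by positivity
  set ind : ℝ → ℝ := (Set.Ioo (σ - r') (σ + r')).indicator (w σ) with hind
  have hindint : IntervalIntegrable ind volume 0 t := by
    rw [intervalIntegrable_iff_integrableOn_Ioc_of_le ht]
    have hw2 := hwint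
    rw [intervalIntegrable_iff_integrableOn_Ioc_of_le ht] at hw2
    exact hw2.indicator measurableSet_Ioo
  have hEw_le : ∀ s ∈ Set.Icc (0:ℝ) t, E s * w σ s ≤ Real.sqrt a * E s + ind s := by
    intro s hs
    have hE1 : E s ≤ 1 := by
      rw [hE]
      apply Real.exp_le_one_iff.2
      have : 0 ≤ a * (t - s) := by
        apply mul_nonneg ha0.le
        linarith [hs.2]
      linarith
    have hEpos : 0 < E s := Real.exp_pos _
    by_cases hmem : s ∈ Set.Ioo (σ - r') (σ + r')
    · have : ind s = w σ s := by rw [hind, Set.indicator_of_mem hmem]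
      rw [this]
      have h2 : E s * w σ s ≤ w σ s := by
        nlinarith [w_nonneg σ s]
      nlinarith [Real.sqrt_nonneg a, hEpos.le]
    · have hindz : ind s = 0 := by rw [hind, Set.indicator_of_notMem hmem]
      rw [hindz, add_zero]
      have hfar : r' ≤ |s - σ| := by
        simp only [Set.mem_Ioo, not_and_or, not_lt] at hmem
        rcases hmem with h | h
        · rw [abs_of_nonpos (by linarith)]; linarith
        · rw [abs_of_nonneg (by linarith)]; linarith
      have hwle : w σ s ≤ Real.sqrt a := by
        rcases lt_trichotomy s σ with h | h | h
        · rw [w_eq_of_lt h]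
          have h1 : r' ≤ σ - s := by
            rw [abs_of_nonpos (by linarith)] at hfar; linarith
          have h2 : Real.sqrt r' ≤ Real.sqrt (σ - s) := Real.sqrt_le_sqrt h1
          have h3 : (Real.sqrt (σ - s))⁻¹ ≤ (Real.sqrt r')⁻¹ := by
            apply inv_anti₀ (Real.sqrt_pos.2 hr'pos) h2
          have h4 : (Real.sqrt r')⁻¹ = Real.sqrt a := by
            rw [hr', one_div, Real.sqrt_inv, inv_inv]
          linarith
        · exfalso; rw [h] at hfar; simp at hfar; linarith
        · rw [w_eq_of_gt h]
          have h1 : r' ≤ s - σ := by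
            rw [abs_of_nonneg (by linarith)] at hfar; linarith
          have h2 : Real.sqrt r' ≤ Real.sqrt (s - σ) := Real.sqrt_le_sqrt h1
          have h3 : (Real.sqrt (s - σ))⁻¹ ≤ (Real.sqrt r')⁻¹ := by
            apply inv_anti₀ (Real.sqrt_pos.2 hr'pos) h2
          have h4 : (Real.sqrt r')⁻¹ = Real.sqrt a := by
            rw [hr', one_div, Real.sqrt_inv, inv_inv]
          linarith
      nlinarith [hEpos.le]
  have hEwbound : ∫ s in (0:ℝ)..t, E s * w σ s ≤ 5 / Real.sqrt a := by
    have hstep : ∫ s in (0:ℝ)..t, E s * w σ s ≤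
        ∫ s in (0:ℝ)..t, (Real.sqrt a * E s + ind s) := by
      apply intervalIntegral.integral_mono_on ht hEwint
        ((hEint.const_mul (Real.sqrt a)).add hindint) hEw_le
    have hsplit : ∫ s in (0:ℝ)..t, (Real.sqrt a * E s + ind s)
        = Real.sqrt a * (∫ s in (0:ℝ)..t, E s) + ∫ s in (0:ℝ)..t, ind s := by
      rw [intervalIntegral.integral_add (hEint.const_mul (Real.sqrt a)) hindint,
        intervalIntegral.integral_const_mul]
    have hindbound : ∫ s in (0:ℝ)..t, ind s ≤ 4 / Real.sqrt a := by
      have e1 : ∫ s in (0:ℝ)..t, ind s = ∫ s in Set.Ioc 0 t, ind s :=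
        intervalIntegral.integral_of_le ht
      have e2 : ∫ s in Set.Ioc 0 t, ind s
          = ∫ s in Set.Ioc 0 t ∩ Set.Ioo (σ - r') (σ + r'), w σ s := by
        rw [hind, setIntegral_indicator measurableSet_Ioo]
      have hwIoo : IntegrableOn (w σ) (Set.Ioo (σ - r') (σ + r')) volume := by
        have hthis := w_intervalIntegrable σ (σ - r') (σ + r')
        rw [intervalIntegrable_iff_integrableOn_Ioc_of_le (by linarith)] at hthis
        exact hthis.mono_set Set.Ioo_subset_Ioc_self
      have e3 : ∫ s in Set.Ioc 0 t ∩ Set.Ioo (σ - r') (σ + r'), w σ s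
          ≤ ∫ s in Set.Ioo (σ - r') (σ + r'), w σ s := by
        apply setIntegral_mono_set hwIoo
        · filter_upwards with u using w_nonneg σ u
        · exact (Set.inter_subset_right).eventuallyLE
      have e4 : ∫ s in Set.Ioo (σ - r') (σ + r'), w σ s
          = ∫ s in (σ - r')..(σ + r'), w σ s := by
        rw [intervalIntegral.integral_of_le (by linarith), integral_Ioc_eq_integral_Ioo]
      have e5 : ∫ s in (σ - r')..(σ + r'), w σ s = 4 * Real.sqrt r' :=
        w_integral_symm σ r' hr'pos.le
      have e6 : Real.sqrt r' = 1 / Real.sqrt a := by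
        rw [hr', one_div, Real.sqrt_inv, one_div]
      rw [e1, e2]
      calc ∫ s in Set.Ioc 0 t ∩ Set.Ioo (σ - r') (σ + r'), w σ s
          ≤ ∫ s in Set.Ioo (σ - r') (σ + r'), w σ s := e3
        _ = 4 * Real.sqrt r' := by rw [e4, e5]
        _ = 4 / Real.sqrt a := by rw [e6]; ring
    have hfive : (1:ℝ)/Real.sqrt a + 4/Real.sqrt a = 5/Real.sqrt a := by ring
    have hsaE : Real.sqrt a * (∫ s in (0:ℝ)..t, E s) ≤ 1 / Real.sqrt a := by
      have h1 : Real.sqrt a * (∫ s in (0:ℝ)..t, E s) ≤ Real.sqrt a * (1 / a) := by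
        apply mul_le_mul_of_nonneg_left hintE hsa.le
      have h2 : Real.sqrt a * (1 / a) = 1 / Real.sqrt a := by
        rw [show a = Real.sqrt a * Real.sqrt a from (Real.mul_self_sqrt ha0.le).symm]
        field_simp
        rw [Real.sqrt_sq hsa.le]
      linarith
    linarith
  -- final assembly
  have hgeq : ∫ s in (0:ℝ)..t, g s
      = (∫ s in (0:ℝ)..t, E s) * K + 4 * ∫ s in (0:ℝ)..t, E s * w σ s := by
    rw [hg, intervalIntegral.integral_add (hEint.mul_const K) (hEwint.const_mul 4),
      intervalIntegral.integral_mul_const, intervalIntegral.integral_const_mul]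
  have hKterm : (∫ s in (0:ℝ)..t, E s) * K ≤ K / Real.sqrt a := by
    have h1 : (∫ s in (0:ℝ)..t, E s) * K ≤ (1 / a) * K :=
      mul_le_mul_of_nonneg_right hintE hK
    have h2 : (1:ℝ) / a ≤ 1 / Real.sqrt a := by
      apply div_le_div_of_nonneg_left one_pos.le hsa
      calc Real.sqrt a ≤ Real.sqrt (a * a) := Real.sqrt_le_sqrt (by nlinarith)
      _ = a := Real.sqrt_mul_self ha0.le
    calc (∫ s in (0:ℝ)..t, E s) * K ≤ (1 / a) * K := h1
    _ ≤ (1 / Real.sqrt a) * K := mul_le_mul_of_nonneg_right h2 hK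
    _ = K / Real.sqrt a := by ring
  have hEwnn : (0:ℝ) ≤ 5 / Real.sqrt a ∨ True := Or.inr trivial
  calc ∫ s in (0:ℝ)..t, f s ≤ ∫ s in (0:ℝ)..t, g s := h1
  _ = (∫ s in (0:ℝ)..t, E s) * K + 4 * ∫ s in (0:ℝ)..t, E s * w σ s := hgeq
  _ ≤ K / Real.sqrt a + 4 * (5 / Real.sqrt a) := by
      have := hEwbound
      linarith
  _ = (K + 20) / Real.sqrt a := by field_simp; ring


end SingAux
open SingAux


lemma small_v_straight (ξ : E3 → ℝ) (hcont : Continuous ξ) (t s : ℝ) (x v : E3)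
    (ht1 : t ≤ 1) (hs0 : 0 ≤ s) (hx : ξ x < 0)
    (hbig : 2 * ‖v‖ ≤ Metric.infDist x (bdryOmega ξ)) :
    Xtr ξ s t x v = x - (t - s) • v := by
  rw [Xtr, if_neg]
  rintro ⟨hits, hsle⟩
  have hvne : v ≠ 0 := by
    rintro rfl
    obtain ⟨τ, hτ0, hmem⟩ := hits
    exact hmem (by simpa [domOmega] using hx)
  have hvpos : 0 < ‖v‖ := norm_pos_iff.2 hvne
  have htb := tb_large ξ hcont x v hx hits hvne
  have h2 : (2:ℝ) ≤ Metric.infDist x (bdryOmega ξ) / ‖v‖ := by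
    rw [le_div_iff₀ hvpos]
    linarith
  linarith

lemma small_branch_integral (ξ : E3 → ℝ) (hcont : Continuous ξ) (ε t a : ℝ) (x v : E3)
    (hε0 : 0 < ε) (ht0 : 0 ≤ t) (ht1 : t ≤ 1) (ha0 : 0 < a) (hx : ξ x < 0)
    (hdist : ε ≤ Metric.infDist x (bdryOmega ξ)) (hv : ‖v‖ ≤ ε/2)
    (hfint : IntervalIntegrable (fun s => Real.exp (-(a*(t-s))) *
      Real.log (1 + 1/Metric.infDist (Xtr ξ s t x v) (bdryOmega ξ))) volume 0 t) :
    (∫ s in (0:ℝ)..t, Real.exp (-(a*(t-s))) *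
        Real.log (1 + 1/Metric.infDist (Xtr ξ s t x v) (bdryOmega ξ)))
      ≤ (1/a) * (2 * Real.log (1+1/ε)) := by
  have hnv : 0 ≤ ‖v‖ := norm_nonneg v
  have hXeq : ∀ s ∈ Set.Icc (0:ℝ) t, Xtr ξ s t x v = x - (t - s) • v := by
    intro s hs
    exact small_v_straight ξ hcont t s x v ht1 hs.1 hx (by linarith)
  have hDle : ∀ s ∈ Set.Icc (0:ℝ) t,
      Real.log (1 + 1 / Metric.infDist (Xtr ξ s t x v) (bdryOmega ξ))
        ≤ 2 * Real.log (1 + 1/ε) := by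
    intro s hs
    have hD : ε/2 ≤ Metric.infDist (Xtr ξ s t x v) (bdryOmega ξ) := by
      rw [hXeq s hs]
      have h1 := Metric.infDist_le_infDist_add_dist
        (x := x) (y := x - (t-s) • v) (s := bdryOmega ξ)
      have hdxy : dist x (x - (t - s) • v) ≤ ε/2 := by
        rw [dist_eq_norm]
        have he : x - (x - (t-s) • v) = (t-s) • v := by module
        rw [he, norm_smul, Real.norm_eq_abs,
          abs_of_nonneg (by linarith [hs.2] : (0:ℝ) ≤ t - s)]
        nlinarith [hs.1, hs.2]
      have hdd : dist (x - (t - s) • v) x = dist x (x - (t-s) • v) := dist_comm _ _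
      linarith
    have hDpos : 0 < Metric.infDist (Xtr ξ s t x v) (bdryOmega ξ) := by linarith
    have hfrac : 1 / Metric.infDist (Xtr ξ s t x v) (bdryOmega ξ) ≤ 2/ε := by
      rw [div_le_div_iff₀ hDpos hε0]
      linarith
    have h1ε : 0 < 1/ε := by positivity
    calc Real.log (1 + 1 / Metric.infDist (Xtr ξ s t x v) (bdryOmega ξ))
        ≤ Real.log (1 + 2/ε) := Real.log_le_log (by positivity) (by linarith)
    _ ≤ Real.log ((1 + 1/ε)^2) := by
        apply Real.log_le_log (by positivity)
        have h2e : 2/ε = 2 * (1/ε) := by ring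
        nlinarith
    _ = 2 * Real.log (1 + 1/ε) := by rw [Real.log_pow]; push_cast; ring
  have hEcont : Continuous fun s : ℝ => Real.exp (-(a * (t - s))) :=
    Real.continuous_exp.comp (by continuity)
  have hmono : (∫ s in (0:ℝ)..t, Real.exp (-(a * (t - s))) *
        Real.log (1 + 1 / Metric.infDist (Xtr ξ s t x v) (bdryOmega ξ)))
      ≤ ∫ s in (0:ℝ)..t, Real.exp (-(a * (t - s))) * (2 * Real.log (1 + 1/ε)) := by
    apply intervalIntegral.integral_mono_on ht0 hfint
      ((hEcont.mul continuous_const).intervalIntegrable 0 t)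
    intro s hs
    exact mul_le_mul_of_nonneg_left (hDle s hs) (Real.exp_pos _).le
  have heq2 : (∫ s in (0:ℝ)..t, Real.exp (-(a * (t - s))) * (2 * Real.log (1 + 1/ε)))
      = (∫ s in (0:ℝ)..t, Real.exp (-(a * (t - s)))) * (2 * Real.log (1 + 1/ε)) :=
    intervalIntegral.integral_mul_const _ _
  have hEb : (∫ s in (0:ℝ)..t, Real.exp (-(a * (t - s)))) ≤ 1/a :=
    SingAux.exp_integral_le ha0
  have hlog0 : 0 ≤ Real.log (1 + 1/ε) := Real.log_nonneg (by
    have : 0 < 1/ε := by positivity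
    linarith)
  calc (∫ s in (0:ℝ)..t, Real.exp (-(a * (t - s))) *
        Real.log (1 + 1 / Metric.infDist (Xtr ξ s t x v) (bdryOmega ξ)))
      ≤ (∫ s in (0:ℝ)..t, Real.exp (-(a * (t - s)))) * (2 * Real.log (1 + 1/ε)) := by
        rw [← heq2]; exact hmono
  _ ≤ (1/a) * (2 * Real.log (1 + 1/ε)) := by
      apply mul_le_mul_of_nonneg_right hEb (by linarith)

lemma pointwise_log_bound (ξ : E3 → ℝ) (L θ : ℝ) (hθ : 0 < θ) (hL0 : 0 ≤ L)
    (hLb : ∀ y : E3, ξ y ≤ 0 → Real.log (1 + 1 / Metric.infDist y (bdryOmega ξ)) ≤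
      Real.log 2 + Real.log (1 + L / (-ξ y)))
    (v : E3) (hvpos : 0 < ‖v‖) (y : E3) (u : ℝ) (hu : u ≠ 0)
    (hξy : ξ y ≤ -(θ * ‖v‖^2/2) * u^2) :
    Real.log (1 + 1 / Metric.infDist y (bdryOmega ξ)) ≤
      (Real.log 2 + 2 * Real.log (1 + Real.sqrt (2*L/(θ*‖v‖^2))))
        + 4 * Real.sqrt (1/|u|) := by
  set M : ℝ := 2*L/(θ*‖v‖^2) with hM
  have hM0 : 0 ≤ M := by positivity
  have hsM0 : 0 ≤ Real.sqrt M := Real.sqrt_nonneg M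
  have hu2 : 0 < u^2 := by positivity
  have habs : 0 < |u| := abs_pos.2 hu
  have hcc : 0 < θ * ‖v‖^2 := by positivity
  have hξneg : ξ y < 0 := lt_of_le_of_lt hξy (by nlinarith)
  have h1 := hLb y hξneg.le
  have hdenom : θ * ‖v‖^2 / 2 * u^2 ≤ -ξ y := by nlinarith
  have hdpos : 0 < θ * ‖v‖^2/2 * u^2 := by positivity
  have h2 : L / (-ξ y) ≤ M / u^2 := by
    have e : M / u^2 = L / (θ * ‖v‖^2 / 2 * u^2) := by
      rw [hM]
      field_simp
    rw [e]
    exact div_le_div_of_nonneg_left hL0 hdpos hdenom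
  have hLdiv : 0 ≤ L / (-ξ y) := div_nonneg hL0 (by linarith)
  have hlog12 : Real.log (1 + L / (-ξ y)) ≤ Real.log (1 + M / u^2) := by
    apply Real.log_le_log (by linarith)
    linarith
  set b : ℝ := Real.sqrt M / |u| with hb
  have hb0 : 0 ≤ b := by positivity
  have e1 : b^2 = M / u^2 := by
    rw [hb, div_pow, Real.sq_sqrt hM0, sq_abs]
  have hlog3 : Real.log (1 + M/u^2) ≤ 2 * Real.log (1 + b) := by
    calc Real.log (1 + M/u^2) ≤ Real.log ((1+b)^2) := by
          apply Real.log_le_log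
          · have : 0 ≤ M/u^2 := by positivity
            linarith
          · nlinarith
    _ = 2 * Real.log (1+b) := by rw [Real.log_pow]; push_cast; ring
  have hinvu : 0 < 1/|u| := by positivity
  have hlog4 : Real.log (1+b) ≤ Real.log (1 + Real.sqrt M) + Real.log (1 + 1/|u|) := by
    have h4 : 1 + b ≤ (1 + Real.sqrt M) * (1 + 1/|u|) := by
      have hbe : b = Real.sqrt M * (1/|u|) := by rw [hb]; ring
      nlinarith
    calc Real.log (1+b) ≤ Real.log ((1 + Real.sqrt M) * (1 + 1/|u|)) :=
          Real.log_le_log (by linarith) h4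
    _ = _ := Real.log_mul (by positivity) (by positivity)
  have h5 : Real.log (1 + 1/|u|) ≤ 2 * Real.sqrt (1/|u|) :=
    SingAux.log_le_two_sqrt (le_of_lt hinvu)
  linarith

lemma K_bound (L θ ε nv : ℝ) (hθ : 0 < θ) (hL0 : 0 ≤ L) (hε0 : 0 < ε) (hε1 : ε < 1)
    (hnv : ε/2 < nv) :
    Real.log 2 + 2 * Real.log (1 + Real.sqrt (2*L/(θ*nv^2))) + 20 ≤
      ((Real.log 2 + 2 * Real.log (1 + 2 * Real.sqrt (2*L/θ)) + 20) / Real.log 2 + 3)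
        * Real.log (1 + 1/ε) := by
  have hnv0 : 0 < nv := by linarith
  set c₂ : ℝ := 2 * Real.sqrt (2*L/θ) with hc₂
  have hc₂0 : 0 ≤ c₂ := by positivity
  have hlog2pos : (0:ℝ) < Real.log 2 := Real.log_pos (by norm_num)
  have hlc₂ : 0 ≤ Real.log (1 + c₂) := Real.log_nonneg (by linarith)
  have h1ε : 0 < 1/ε := by positivity
  have hloge : Real.log 2 ≤ Real.log (1 + 1/ε) := by
    apply Real.log_le_log (by norm_num)
    have : 1 < 1/ε := by rw [lt_div_iff₀ hε0]; linarith
    linarith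
  have hlogε0 : 0 < Real.log (1 + 1/ε) := lt_of_lt_of_le hlog2pos hloge
  set M : ℝ := 2*L/(θ*nv^2) with hM
  have hM0 : 0 ≤ M := by positivity
  have hMle : M ≤ (c₂/ε)^2 := by
    have hsq : (c₂/ε)^2 = 2*L/θ * (4 / ε^2) := by
      rw [hc₂, div_pow, mul_pow, Real.sq_sqrt (by positivity : (0:ℝ) ≤ 2*L/θ)]
      ring
    have hMeq : M = 2*L/θ * (1/nv^2) := by
      rw [hM]
      field_simp
    rw [hsq, hMeq]
    apply mul_le_mul_of_nonneg_left _ (by positivity : (0:ℝ) ≤ 2*L/θ)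
    rw [div_le_div_iff₀ (by positivity) (by positivity)]
    nlinarith [mul_pos (show (0:ℝ) < 2*nv - ε by linarith) (show (0:ℝ) < 2*nv + ε by linarith)]
  have hsqrtM : Real.sqrt M ≤ c₂/ε := by
    have h := Real.sqrt_le_sqrt hMle
    rwa [Real.sqrt_sq (by positivity : (0:ℝ) ≤ c₂/ε)] at h
  have hsM0 : 0 ≤ Real.sqrt M := Real.sqrt_nonneg M
  have hlogM : Real.log (1 + Real.sqrt M) ≤ Real.log (1+c₂) + Real.log (1+1/ε) := by
    have h4 : 1 + Real.sqrt M ≤ (1+c₂)*(1+1/ε) := by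
      have hce : c₂/ε = c₂ * (1/ε) := by ring
      nlinarith
    calc Real.log (1 + Real.sqrt M) ≤ Real.log ((1+c₂)*(1+1/ε)) :=
          Real.log_le_log (by linarith) h4
    _ = _ := Real.log_mul (by positivity) (by positivity)
  set A : ℝ := Real.log 2 + 2*Real.log (1+c₂) + 20 with hA
  have hA0 : 0 < A := by rw [hA]; linarith
  have h2 : A ≤ A / Real.log 2 * Real.log (1+1/ε) := by
    rw [div_mul_eq_mul_div, le_div_iff₀ hlog2pos]
    nlinarith
  have h3 : (A/Real.log 2 + 3) * Real.log (1+1/ε)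
      = A/Real.log 2 * Real.log (1+1/ε) + 3 * Real.log (1+1/ε) := by ring
  rw [show ((Real.log 2 + 2 * Real.log (1 + 2 * Real.sqrt (2*L/θ)) + 20) / Real.log 2 + 3)
      = A / Real.log 2 + 3 by rw [hA, hc₂]]
  rw [h3]
  nlinarith

set_option maxHeartbeats 1000000 in
/-- **Lemma 5.8** (dynamical singular regime integration away from the boundary).
There is a constant `C` depending only on the domain such that for every `0 < ε < 1`,
`0 < t ≤ 1`, `x ∈ Ω` with `d(x,∂Ω) ≥ ε`, every `v` and every `ϖ > 1`,
`∫₀ᵗ e^{−ϖ⟨v⟩²(t−s)} ln(1 + 1/d(X(s;t,x,v),∂Ω)) ds ≤ (C/(√ϖ ⟨v⟩)) ln(1 + 1/ε)`. -/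
theorem dynamical_singular_regime_integration_away
    (ξ : E3 → ℝ) (θ : ℝ) (hdom : DomainHyp ξ θ) :
    ∃ C > (0 : ℝ), ∀ ε : ℝ, 0 < ε → ε < 1 → ∀ t : ℝ, 0 < t → t ≤ 1 →
      ∀ x ∈ domOmega ξ, ε ≤ Metric.infDist x (bdryOmega ξ) →
      ∀ v : E3, ∀ ϖ : ℝ, 1 < ϖ →
      (∫ s in (0 : ℝ)..t,
          Real.exp (-(ϖ * jap v ^ 2 * (t - s))) *
            Real.log (1 + 1 / Metric.infDist (Xtr ξ s t x v) (bdryOmega ξ)))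
        ≤ C / (Real.sqrt ϖ * jap v) * Real.log (1 + 1 / ε) := by
  classical
  by_cases hne : (bdryOmega ξ).Nonempty
  swap
  · refine ⟨1, one_pos, fun ε hε0 hε1 t ht0 ht1 x hxΩ hdist v ϖ hϖ => ?_⟩
    exfalso
    rw [Set.not_nonempty_iff_eq_empty] at hne
    rw [hne, Metric.infDist_empty] at hdist
    linarith
  obtain ⟨L, hL0, hLb⟩ := log_dist_bound ξ hdom.smooth hdom.gradNe hdom.bounded hne
  have hθ := hdom.pos
  have hc₂0 : 0 ≤ 2 * Real.sqrt (2 * L / θ) := by positivity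
  have hlog2pos : (0:ℝ) < Real.log 2 := Real.log_pos (by norm_num)
  have hlc₂ : 0 ≤ Real.log (1 + 2 * Real.sqrt (2 * L / θ)) := Real.log_nonneg (by linarith)
  refine ⟨(Real.log 2 + 2 * Real.log (1 + 2 * Real.sqrt (2 * L / θ)) + 20) / Real.log 2 + 3,
    by positivity, fun ε hε0 hε1 t ht0 ht1 x hxΩ hdist v ϖ hϖ => ?_⟩
  set C : ℝ := (Real.log 2 + 2 * Real.log (1 + 2 * Real.sqrt (2 * L / θ)) + 20) / Real.log 2 + 3
    with hC
  have hCge : 3 ≤ C := by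
    have h9 : 0 ≤ (Real.log 2 + 2 * Real.log (1 + 2 * Real.sqrt (2 * L / θ)) + 20) /
        Real.log 2 := by positivity
    rw [hC]
    linarith
  have hxneg : ξ x < 0 := hxΩ
  have hjap1 : 1 ≤ jap v := by
    have h := Real.sqrt_le_sqrt (show (1:ℝ) ≤ 1 + ‖v‖ ^ 2 by nlinarith [sq_nonneg ‖v‖])
    rw [Real.sqrt_one] at h
    exact h
  have hjap0 : 0 < jap v := lt_of_lt_of_le one_pos hjap1
  set a : ℝ := ϖ * jap v ^ 2 with ha
  have ha1 : 1 ≤ a := by nlinarith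
  have ha0 : 0 < a := by linarith
  have hsa : 0 < Real.sqrt a := Real.sqrt_pos.2 ha0
  have hsaeq : Real.sqrt a = Real.sqrt ϖ * jap v := by
    rw [ha, Real.sqrt_mul (by linarith : (0:ℝ) ≤ ϖ), Real.sqrt_sq hjap0.le]
  have hloge : Real.log 2 ≤ Real.log (1 + 1/ε) := by
    apply Real.log_le_log (by norm_num)
    have : 1 < 1/ε := by rw [lt_div_iff₀ hε0]; linarith
    linarith
  have hlogε0 : 0 < Real.log (1 + 1/ε) := lt_of_lt_of_le hlog2pos hloge
  have hRHS : 0 ≤ C / (Real.sqrt ϖ * jap v) * Real.log (1 + 1/ε) := by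
    apply mul_nonneg _ hlogε0.le
    apply div_nonneg (by linarith)
    rw [← hsaeq]; exact hsa.le
  by_cases hfint : IntervalIntegrable
      (fun s => Real.exp (-(a * (t - s))) *
        Real.log (1 + 1 / Metric.infDist (Xtr ξ s t x v) (bdryOmega ξ))) volume 0 t
  swap
  · rw [intervalIntegral.integral_undef hfint]
    exact hRHS
  have hinva : (1:ℝ)/a ≤ 1/Real.sqrt a := by
    apply div_le_div_of_nonneg_left one_pos.le hsa
    calc Real.sqrt a ≤ Real.sqrt (a * a) := Real.sqrt_le_sqrt (by nlinarith)
    _ = a := Real.sqrt_mul_self ha0.le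
  by_cases hv : ‖v‖ ≤ ε / 2
  · -- small velocity branch
    have hsmall := small_branch_integral ξ hdom.smooth.continuous ε t a x v
      hε0 ht0.le ht1 ha0 hxneg hdist hv hfint
    calc (∫ s in (0:ℝ)..t, Real.exp (-(a * (t - s))) *
          Real.log (1 + 1 / Metric.infDist (Xtr ξ s t x v) (bdryOmega ξ)))
        ≤ (1/a) * (2 * Real.log (1 + 1/ε)) := hsmall
    _ ≤ (1/Real.sqrt a) * (2 * Real.log (1 + 1/ε)) := by
        apply mul_le_mul_of_nonneg_right hinva (by linarith)
    _ ≤ C / (Real.sqrt ϖ * jap v) * Real.log (1 + 1/ε) := by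
        rw [← hsaeq]
        rw [show (1/Real.sqrt a) * (2 * Real.log (1 + 1/ε))
          = (2/Real.sqrt a) * Real.log (1 + 1/ε) by ring]
        apply mul_le_mul_of_nonneg_right _ hlogε0.le
        exact (div_le_div_iff_of_pos_right hsa).mpr (by linarith)
  · -- main branch
    rw [not_le] at hv
    have hvpos : 0 < ‖v‖ := by linarith
    have hvne : v ≠ 0 := norm_pos_iff.1 hvpos
    obtain ⟨σ, hσ⟩ := traj_xi_bound ξ θ hθ hdom.smooth hdom.uconvex hdom.gradNe t x v hxneg hvne
    set K : ℝ := Real.log 2 + 2 * Real.log (1 + Real.sqrt (2*L/(θ*‖v‖^2))) with hK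
    have hK0 : 0 ≤ K := by
      have h8 : 0 ≤ Real.log (1 + Real.sqrt (2*L/(θ*‖v‖^2))) :=
        Real.log_nonneg (by
          have := Real.sqrt_nonneg (2*L/(θ*‖v‖^2))
          linarith)
      rw [hK]
      linarith
    have hbound : ∀ s ∈ Set.Icc (0:ℝ) t, s ≠ σ →
        Real.exp (-(a * (t - s))) *
            Real.log (1 + 1 / Metric.infDist (Xtr ξ s t x v) (bdryOmega ξ))
          ≤ Real.exp (-(a * (t - s))) * K
            + 4 * (Real.exp (-(a * (t - s))) * SingAux.w σ s) := by
      intro s hs hne'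
      have hune : s - σ ≠ 0 := sub_ne_zero.2 hne'
      have hpw := pointwise_log_bound ξ L θ hθ hL0 hLb v hvpos (Xtr ξ s t x v)
        (s - σ) hune (hσ s hs)
      have heqw : Real.sqrt (1/|s - σ|) = SingAux.w σ s := by
        rcases lt_or_gt_of_ne hne' with h | h
        · rw [SingAux.w_eq_of_lt h, abs_of_neg (by linarith : s - σ < 0),
            show -(s - σ) = σ - s by ring, one_div, Real.sqrt_inv]
        · rw [SingAux.w_eq_of_gt h, abs_of_pos (by linarith : 0 < s - σ),
            one_div, Real.sqrt_inv]
      rw [heqw] at hpw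
      have hEnn : (0:ℝ) ≤ Real.exp (-(a * (t - s))) := (Real.exp_pos _).le
      calc Real.exp (-(a * (t - s))) *
            Real.log (1 + 1 / Metric.infDist (Xtr ξ s t x v) (bdryOmega ξ))
          ≤ Real.exp (-(a * (t - s))) * (K + 4 * SingAux.w σ s) := by
            apply mul_le_mul_of_nonneg_left _ hEnn
            rw [hK]
            linarith
      _ = Real.exp (-(a * (t - s))) * K
            + 4 * (Real.exp (-(a * (t - s))) * SingAux.w σ s) := by ring
    have hmain := SingAux.master_integral ha1 ht0.le hK0 hfint hbound
    have hKfin : K + 20 ≤ C * Real.log (1+1/ε) := by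
      have := K_bound L θ ε ‖v‖ hθ hL0 hε0 hε1 hv
      rw [hK, hC]
      linarith
    calc (∫ s in (0:ℝ)..t,
        Real.exp (-(a * (t - s))) *
          Real.log (1 + 1 / Metric.infDist (Xtr ξ s t x v) (bdryOmega ξ)))
        ≤ (K + 20) / Real.sqrt a := hmain
    _ ≤ C * Real.log (1+1/ε) / Real.sqrt a := (div_le_div_iff_of_pos_right hsa).mpr hKfin
    _ = C / (Real.sqrt ϖ * jap v) * Real.log (1 + 1/ε) := by
        rw [← hsaeq]
        ring

end
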